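/- Let k be a field and let f ∈ k[[x,y,z]] be a nonzero formal power series such that in_{(6,4,3)}f = x² + y³. Then ord_{(9,6,4)}f = 18 and in_{(9,6,4)}f = x² + y³ + a·yz³ for some a ∈ k. -/

import Mathlib

open MvPowerSeries

/-- The order of a multivariate power series `f` with respect to the weight vector `w`:
the minimum of `w · m` over the support of `f` (and `0` for `f = 0`, by `sInf ∅ = 0`). -/
noncomputable def wOrd {k : Type*} [Field k] (w : Fin 3 → ℕ)
    (f : MvPowerSeries (Fin 3) k) : ℕ :=
  sInf {n | ∃ m : Fin 3 →₀ ℕ, MvPowerSeries.coeff m f ≠ 0 ∧ ∑ i, w i * m i = n}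

/-- The initial term of `f` with respect to the weight vector `w`: the sum of the terms
of `f` whose exponent `m` satisfies `w · m = wOrd w f`. -/
noncomputable def wIn {k : Type*} [Field k] (w : Fin 3 → ℕ)
    (f : MvPowerSeries (Fin 3) k) : MvPowerSeries (Fin 3) k :=
  fun m => if (∑ i, w i * m i) = wOrd w f then MvPowerSeries.coeff m f else 0

lemma fin3_ext {m n : Fin 3 →₀ ℕ} (h0 : m 0 = n 0) (h1 : m 1 = n 1) (h2 : m 2 = n 2) :
    m = n := Finsupp.ext fun i => by fin_cases i <;> assumption

lemma key_lt (a b c : ℕ) (h : 9*a+6*b+4*c < 18) :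
    6*a+4*b+3*c < 12 ∨ (a=1∧b=0∧c=2) ∨ (a=0∧b=0∧c=4) := by
  have ha : a ≤ 1 := by omega
  have hb : b ≤ 2 := by omega
  interval_cases a <;> interval_cases b <;> omega

lemma key_eq (a b c : ℕ) (h : 9*a+6*b+4*c = 18) :
    (a=2∧b=0∧c=0) ∨ (a=0∧b=3∧c=0) ∨ (a=0∧b=1∧c=3) := by omega

theorem stmt_14 {k : Type*} [Field k] (f : MvPowerSeries (Fin 3) k) (hf : f ≠ 0)
    (h : wIn ![6,4,3] f = X 0 ^ 2 + X 1 ^ 3) :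
    wOrd ![9,6,4] f = 18 ∧
      ∃ a : k, wIn ![9,6,4] f = X 0 ^ 2 + X 1 ^ 3 + (C a : MvPowerSeries (Fin 3) k) * X 1 * X 2 ^ 3 := by
  classical
  set s1 : Fin 3 →₀ ℕ := Finsupp.single 0 2 with hs1
  set s2 : Fin 3 →₀ ℕ := Finsupp.single 1 3 with hs2
  set s3 : Fin 3 →₀ ℕ := Finsupp.single 1 1 + Finsupp.single 2 3 with hs3
  have s1a : s1 0 = 2 := by simp [hs1, Finsupp.single_apply]
  have s1b : s1 1 = 0 := by simp [hs1, Finsupp.single_apply]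
  have s1c : s1 2 = 0 := by simp [hs1, Finsupp.single_apply]
  have s2a : s2 0 = 0 := by simp [hs2, Finsupp.single_apply]
  have s2b : s2 1 = 3 := by simp [hs2, Finsupp.single_apply]
  have s2c : s2 2 = 0 := by simp [hs2, Finsupp.single_apply]
  have s3a : s3 0 = 0 := by simp [hs3, Finsupp.single_apply]
  have s3b : s3 1 = 1 := by simp [hs3, Finsupp.single_apply]
  have s3c : s3 2 = 3 := by simp [hs3, Finsupp.single_apply]
  have ne12 : s1 ≠ s2 := fun he => by
    have h0 := DFunLike.congr_fun he 0; rw [s1a, s2a] at h0; omega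
  have ne13 : s1 ≠ s3 := fun he => by
    have h0 := DFunLike.congr_fun he 0; rw [s1a, s3a] at h0; omega
  have ne23 : s2 ≠ s3 := fun he => by
    have h0 := DFunLike.congr_fun he 1; rw [s2b, s3b] at h0; omega
  have sumw1 : ∀ m : Fin 3 →₀ ℕ, ∑ i, (![6,4,3] : Fin 3 → ℕ) i * m i
      = 6 * m 0 + 4 * m 1 + 3 * m 2 := fun m => by
    simp [Fin.sum_univ_three]
  have sumw2 : ∀ m : Fin 3 →₀ ℕ, ∑ i, (![9,6,4] : Fin 3 → ℕ) i * m i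
      = 9 * m 0 + 6 * m 1 + 4 * m 2 := fun m => by
    simp [Fin.sum_univ_three]
  have cIn : ∀ (w : Fin 3 → ℕ) (m : Fin 3 →₀ ℕ), coeff m (wIn w f)
      = if (∑ i, w i * m i) = wOrd w f then coeff m f else 0 := fun _ _ => rfl
  have hc1 : ∀ m : Fin 3 →₀ ℕ, coeff m (X 0 ^ 2 + X 1 ^ 3 : MvPowerSeries (Fin 3) k)
      = (if m = s1 then (1:k) else 0) + (if m = s2 then 1 else 0) := by
    intro m
    rw [map_add, X_pow_eq, X_pow_eq, coeff_monomial, coeff_monomial, hs1, hs2]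
  -- coefficient at s1, and the (6,4,3)-order
  have hR : coeff s1 (X 0 ^ 2 + X 1 ^ 3 : MvPowerSeries (Fin 3) k) = 1 := by
    rw [hc1, if_pos rfl, if_neg ne12, add_zero]
  have h1 : (if (∑ i, (![6,4,3] : Fin 3 → ℕ) i * s1 i) = wOrd ![6,4,3] f
      then coeff s1 f else 0) = 1 :=
    ((cIn ![6,4,3] s1).symm.trans (congrArg (coeff s1) h)).trans hR
  have hsum1 : ∑ i, (![6,4,3] : Fin 3 → ℕ) i * s1 i = 12 := by
    rw [sumw1, s1a, s1b, s1c]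
  rw [hsum1] at h1
  have hord1 : wOrd ![6,4,3] f = 12 := by
    by_contra hh
    rw [if_neg (fun e => hh e.symm)] at h1
    exact one_ne_zero h1.symm
  have hcs1 : coeff s1 f = 1 := by rwa [if_pos hord1.symm] at h1
  -- facts A and B
  have hA : ∀ m : Fin 3 →₀ ℕ, 6 * m 0 + 4 * m 1 + 3 * m 2 < 12 → coeff m f = 0 := by
    intro m hm
    by_contra hc
    have hle : wOrd ![6,4,3] f ≤ 6 * m 0 + 4 * m 1 + 3 * m 2 :=
      Nat.sInf_le ⟨m, hc, sumw1 m⟩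
    omega
  have hB : ∀ m : Fin 3 →₀ ℕ, 6 * m 0 + 4 * m 1 + 3 * m 2 = 12 →
      coeff m f = (if m = s1 then (1:k) else 0) + (if m = s2 then 1 else 0) := by
    intro m hm
    have hh := ((cIn ![6,4,3] m).symm.trans (congrArg (coeff m) h)).trans (hc1 m)
    rwa [sumw1, hm, if_pos hord1.symm] at hh
  -- fact C : everything of (9,6,4)-weight < 18 vanishes
  have hC : ∀ m : Fin 3 →₀ ℕ, 9 * m 0 + 6 * m 1 + 4 * m 2 < 18 → coeff m f = 0 := by
    intro m hm
    rcases key_lt _ _ _ hm with h' | ⟨e0, e1, e2⟩ | ⟨e0, e1, e2⟩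
    · exact hA m h'
    · have hne1 : m ≠ s1 := fun he => by rw [he, s1a] at e0; omega
      have hne2 : m ≠ s2 := fun he => by rw [he, s2a] at e0; omega
      rw [hB m (by omega), if_neg hne1, if_neg hne2, add_zero]
    · have hne1 : m ≠ s1 := fun he => by rw [he, s1a] at e0; omega
      have hne2 : m ≠ s2 := fun he => by rw [he, s2b] at e1; omega
      rw [hB m (by omega), if_neg hne1, if_neg hne2, add_zero]
  -- the (9,6,4)-order is 18
  have hmemS : (18:ℕ) ∈ {n | ∃ m : Fin 3 →₀ ℕ,
      coeff m f ≠ 0 ∧ ∑ i, (![9,6,4] : Fin 3 → ℕ) i * m i = n} :=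
    ⟨s1, by rw [hcs1]; exact one_ne_zero, by rw [sumw2, s1a, s1b, s1c]⟩
  have hord2 : wOrd ![9,6,4] f = 18 := by
    unfold wOrd
    refine le_antisymm (Nat.sInf_le hmemS) ?_
    obtain ⟨m, hm0, hmsum⟩ := Nat.sInf_mem (⟨18, hmemS⟩ : Set.Nonempty _)
    rw [sumw2] at hmsum
    by_contra hlt
    rw [← hmsum] at hlt
    exact hm0 (hC m (by omega))
  refine ⟨hord2, coeff s3 f, ?_⟩
  have hmono : (C (coeff s3 f) * X 1 * X 2 ^ 3 : MvPowerSeries (Fin 3) k)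
      = monomial s3 (coeff s3 f) := by
    rw [mul_assoc, show (C (coeff s3 f) : MvPowerSeries (Fin 3) k)
        = monomial 0 (coeff s3 f) from rfl,
      ← pow_one (X 1 : MvPowerSeries (Fin 3) k), X_pow_eq, X_pow_eq,
      monomial_mul_monomial, monomial_mul_monomial, one_mul, mul_one, zero_add, hs3]
  apply MvPowerSeries.ext
  intro m
  rw [cIn, map_add, hc1, hmono, coeff_monomial, sumw2, hord2]
  by_cases hs : 9 * m 0 + 6 * m 1 + 4 * m 2 = 18
  · rw [if_pos hs]
    rcases key_eq _ _ _ hs with ⟨e0, e1, e2⟩ | ⟨e0, e1, e2⟩ | ⟨e0, e1, e2⟩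
    · have hm : m = s1 := fin3_ext (by rw [e0, s1a]) (by rw [e1, s1b]) (by rw [e2, s1c])
      rw [hm, hcs1, if_pos rfl, if_neg ne12, if_neg ne13]
      norm_num
    · have hm : m = s2 := fin3_ext (by rw [e0, s2a]) (by rw [e1, s2b]) (by rw [e2, s2c])
      rw [hm, hB s2 (by omega), if_neg (Ne.symm ne12), if_pos rfl, if_neg ne23]
      norm_num
    · have hm : m = s3 := fin3_ext (by rw [e0, s3a]) (by rw [e1, s3b]) (by rw [e2, s3c])
      rw [hm, if_neg (Ne.symm ne13), if_neg (Ne.symm ne23), if_pos rfl, zero_add, zero_add]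
  · rw [if_neg hs, if_neg (fun he : m = s1 => hs (by rw [he]; omega)),
      if_neg (fun he : m = s2 => hs (by rw [he]; omega)),
      if_neg (fun he : m = s3 => hs (by rw [he]; omega))]
    norm_num
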